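/- Let N : ℕ → ℕ → ℕ satisfy the recurrence N(ℓ,1) = 1 for all ℓ ≥ 1; N(1,m) = m − 1 for all m ≥ 2; N(ℓ,m) = N(m,m) for all ℓ > m ≥ 2; and N(ℓ,m) = ∑_{j=1}^{m−1} N(ℓ−1,j) for all 2 ≤ ℓ ≤ m. Define T(ℓ,m) := N(ℓ,m) − N(ℓ−1,m). Then for all m ≥ 4 and all ℓ with 2 ≤ ℓ ≤ m − 2, T(ℓ,m) = C(m−2, ℓ), where C(·,·) denotes the binomial coefficient. -/

import Mathlib

theorem T_binomial
    (N : ℕ → ℕ → ℕ)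
    (h1 : ∀ l, 1 ≤ l → N l 1 = 1)
    (h2 : ∀ m, 2 ≤ m → N 1 m = m - 1)
    (h3 : ∀ l m, 2 ≤ m → m < l → N l m = N m m)
    (h4 : ∀ l m, 2 ≤ l → l ≤ m → N l m = ∑ j ∈ Finset.Icc 1 (m - 1), N (l - 1) j)
    (T : ℕ → ℕ → ℤ)
    (hT : ∀ l m, T l m = (N l m : ℤ) - (N (l - 1) m : ℤ)) :
    ∀ m, 4 ≤ m → ∀ l, 2 ≤ l → l ≤ m - 2 → T l m = (Nat.choose (m - 2) l : ℤ) := by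
  suffices H : ∀ l, 2 ≤ l → ∀ m, l ≤ m → T l m = (Nat.choose (m - 2) l : ℤ) by
    intro m hm l hl hlm
    exact H l hl m (by omega)
  intro l hl
  induction l, hl using Nat.le_induction with
  | base =>
    intro m hm
    induction m, hm using Nat.le_induction with
    | base =>
      rw [hT]
      have e1 : N 2 2 = ∑ j ∈ Finset.Icc 1 1, N 1 j := h4 2 2 le_rfl le_rfl
      simp only [Finset.Icc_self, Finset.sum_singleton] at e1
      rw [h1 1 le_rfl] at e1
      rw [e1, h2 2 le_rfl]
      norm_num
    | succ m hm ih =>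
      obtain ⟨k, rfl⟩ : ∃ k, m = k + 1 := ⟨m - 1, by omega⟩
      rw [hT] at ih ⊢
      -- N 2 (k+2) = ∑_{j=1}^{k+1} N 1 j = N 2 (k+1) + N 1 (k+1)
      have e1 : N 2 (k + 2) = ∑ j ∈ Finset.Icc 1 (k + 1), N 1 j := by
        have := h4 2 (k + 2) le_rfl (by omega)
        simpa using this
      have e2 : N 2 (k + 1) = ∑ j ∈ Finset.Icc 1 k, N 1 j := by
        have := h4 2 (k + 1) le_rfl (by omega)
        simpa using this
      have esplit : ∑ j ∈ Finset.Icc 1 (k + 1), N 1 j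
          = (∑ j ∈ Finset.Icc 1 k, N 1 j) + N 1 (k + 1) :=
        Finset.sum_Icc_succ_top (by omega) _
      have e3 : N 2 (k + 2) = N 2 (k + 1) + N 1 (k + 1) := by
        rw [e1, esplit, ← e2]
      have e4 : N 1 (k + 1) = k := by
        have := h2 (k + 1) (by omega); omega
      have e5 : N 1 (k + 2) = k + 1 := by
        have := h2 (k + 2) (by omega); omega
      have ec : (k + 2 - 2).choose 2 = (k + 1 - 2).choose 2 + (k - 1) := by
        have h6 : k + 2 - 2 = (k - 1) + 1 := by omega
        have h7 : k + 1 - 2 = k - 1 := by omega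
        rw [h6, h7]
        have := Nat.choose_succ_succ (k - 1) 1
        simp [Nat.choose_one_right] at this ⊢
        omega
      rw [e3, e4, e5, ec]
      push_cast
      push_cast at ih
      have hcast : ((k - 1 : ℕ) : ℤ) = (k : ℤ) - 1 := by
        have hk : 1 ≤ k := by omega
        push_cast [hk]; ring
      linarith [ih, hcast]
  | succ l hl ih =>
    intro m hm
    induction m, hm using Nat.le_induction with
    | base =>
      -- T (l+1) (l+1) = 0 = choose (l-1) (l+1)
      rw [hT]
      simp only [Nat.add_sub_cancel]
      have e1 : N (l + 1) (l + 1) = ∑ j ∈ Finset.Icc 1 l, N l j := by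
        have := h4 (l + 1) (l + 1) (by omega) le_rfl
        simpa using this
      have e2 : N l (l + 1) = ∑ j ∈ Finset.Icc 1 l, N (l - 1) j := by
        have := h4 l (l + 1) hl (by omega)
        simpa using this
      have hNll : N l l = N (l - 1) l := by
        have := ih l le_rfl
        rw [hT] at this
        have hz : (l - 2).choose l = 0 := Nat.choose_eq_zero_of_lt (by omega)
        rw [hz] at this
        push_cast at this
        omega
      have key : ∀ j ∈ Finset.Icc 1 l, N l j = N (l - 1) j := by
        intro j hj
        simp only [Finset.mem_Icc] at hj
        rcases eq_or_lt_of_le hj.2 with hjl | hjl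
        · subst hjl; exact hNll
        · rcases Nat.lt_or_ge j 2 with hj2 | hj2
          · have hj1 : j = 1 := by omega
            subst hj1
            rw [h1 l (by omega), h1 (l - 1) (by omega)]
          · -- 2 ≤ j < l
            rw [h3 l j hj2 hjl]
            rcases eq_or_lt_of_le (show j ≤ l - 1 by omega) with hje | hje
            · rw [← hje]
            · rw [h3 (l - 1) j hj2 hje]
      have : ∑ j ∈ Finset.Icc 1 l, N l j = ∑ j ∈ Finset.Icc 1 l, N (l - 1) j :=
        Finset.sum_congr rfl key
      rw [e1, e2, this]
      have hz : (l - 1).choose (l + 1) = 0 := Nat.choose_eq_zero_of_lt (by omega)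
      rw [show l + 1 - 2 = l - 1 from by omega, hz]
      push_cast
      ring
    | succ m hm2 ih2 =>
      -- T (l+1) (m+1) = T (l+1) m + T l m
      have hlm : l + 1 ≤ m := hm2
      have e1 : N (l + 1) (m + 1) = ∑ j ∈ Finset.Icc 1 m, N l j := by
        have := h4 (l + 1) (m + 1) (by omega) (by omega)
        simpa using this
      have e2 : N (l + 1) m = ∑ j ∈ Finset.Icc 1 (m - 1), N l j :=
        h4 (l + 1) m (by omega) (by omega)
      have e3 : N l (m + 1) = ∑ j ∈ Finset.Icc 1 m, N (l - 1) j := by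
        have := h4 l (m + 1) hl (by omega)
        simpa using this
      have e4 : N l m = ∑ j ∈ Finset.Icc 1 (m - 1), N (l - 1) j :=
        h4 l m hl (by omega)
      obtain ⟨k, rfl⟩ : ∃ k, m = k + 1 := ⟨m - 1, by omega⟩
      simp only [Nat.add_sub_cancel] at e2 e4
      have s1 : ∑ j ∈ Finset.Icc 1 (k + 1), N l j
          = (∑ j ∈ Finset.Icc 1 k, N l j) + N l (k + 1) :=
        Finset.sum_Icc_succ_top (by omega) _
      have s2 : ∑ j ∈ Finset.Icc 1 (k + 1), N (l - 1) j
          = (∑ j ∈ Finset.Icc 1 k, N (l - 1) j) + N (l - 1) (k + 1) :=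
        Finset.sum_Icc_succ_top (by omega) _
      have r1 : N (l + 1) (k + 2) = N (l + 1) (k + 1) + N l (k + 1) := by
        rw [e1, s1, ← e2]
      have r2 : N l (k + 2) = N l (k + 1) + N (l - 1) (k + 1) := by
        rw [e3, s2, ← e4]
      have hTl : T l (k + 1) = ((k + 1 - 2).choose l : ℤ) := ih (k + 1) (by omega)
      have hTl1 : T (l + 1) (k + 1) = ((k + 1 - 2).choose (l + 1) : ℤ) := ih2
      rw [hT] at hTl hTl1 ⊢
      simp only [Nat.add_sub_cancel] at hTl1 ⊢
      have ec : (k + 2 - 2).choose (l + 1)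
          = (k + 1 - 2).choose l + (k + 1 - 2).choose (l + 1) := by
        have h6 : k + 2 - 2 = (k - 1) + 1 := by omega
        have h7 : k + 1 - 2 = k - 1 := by omega
        rw [h6, h7, Nat.choose_succ_succ]
      rw [ec, r1, r2]
      push_cast
      push_cast at hTl hTl1
      linarith
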